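/- Let u, v : ℝⁿ → ℝ ∪ {+∞} be lower semicontinuous convex functions with u ∧ v convex. Then the subdifferential graphs satisfy Γ_{u∨v} ∪ Γ_{u∧v} = Γ_u ∪ Γ_v and Γ_{u∨v} ∩ Γ_{u∧v} = Γ_u ∩ Γ_v. -/

import Mathlib

open Filter Topology MeasureTheory
open scoped RealInnerProductSpace ENNReal Classical

noncomputable section

/-- Euclidean space ℝⁿ. -/
abbrev En (n : ℕ) := EuclideanSpace ℝ (Fin n)

/-- Convexity of an `EReal`-valued function, via convexity of its epigraph. -/
def ConvexFn {n : ℕ} (u : En n → EReal) : Prop :=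
  Convex ℝ {p : En n × ℝ | u p.1 ≤ (p.2 : EReal)}

/-- The subdifferential of `u` at `x`. -/
def subdiff {n : ℕ} (u : En n → EReal) (x : En n) : Set (En n) :=
  {y | ∀ z, u x + (⟪z - x, y⟫ : EReal) ≤ u z}

/-- The convex (Legendre–Fenchel) conjugate of `u`. -/
def conj {n : ℕ} (u : En n → EReal) (y : En n) : EReal :=
  ⨆ x, ((⟪x, y⟫ : EReal) - u x)

/-- Graph of the subdifferential map. -/
def sgraph {n : ℕ} (u : En n → EReal) : Set (En n × En n) :=
  {p | p.2 ∈ subdiff u p.1}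

/-- Parallel set `P_s(u, η)`. -/
def parallelSet {n : ℕ} (u : En n → EReal) (η : Set (En n × En n)) (s : ℝ) : Set (En n) :=
  {z | ∃ p ∈ η, p.2 ∈ subdiff u p.1 ∧ z = p.1 + s • p.2}

/-- Convex indicator function of a set. -/
def indFn {n : ℕ} (K : Set (En n)) (x : En n) : EReal :=
  if x ∈ K then 0 else ⊤

/-- Lipschitz regularization (Pasch–Hausdorff envelope) `reg_r u = (u* + I_{B_{1/r}})*`. -/
def regLip {n : ℕ} (u : En n → EReal) (r : ℝ) : En n → EReal :=
  conj (fun y => conj u y + indFn (Metric.closedBall (0 : En n) (1 / r)) y)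

section Auxiliary

variable {n : ℕ}

lemma seg_eq' (x z : En n) (t : ℝ) : x + t • (z - x) = (1 - t) • x + t • z := by
  rw [sub_smul, one_smul, smul_sub]; abel

lemma convexFn_seg {f : En n → EReal} (hf : ConvexFn f) {x z : En n} {a b t : ℝ}
    (ha : f x ≤ (a : EReal)) (hb : f z ≤ (b : EReal)) (ht0 : 0 ≤ t) (ht1 : t ≤ 1) :
    f (x + t • (z - x)) ≤ (((1 - t) * a + t * b : ℝ) : EReal) := by
  have h := hf (show (x, a) ∈ _ from ha) (show (z, b) ∈ _ from hb)
    (by linarith : (0:ℝ) ≤ 1 - t) ht0 (by ring)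
  rw [seg_eq']
  simpa [Prod.smul_def, smul_eq_mul] using h

lemma inner_seg' (x z y : En n) (t : ℝ) :
    ⟪(x + t • (z - x)) - x, y⟫ = t * ⟪z - x, y⟫ := by
  rw [add_sub_cancel_left, real_inner_smul_left]

lemma inner_seg2' (x z z' y : En n) (l : ℝ) :
    ⟪(z + l • (z' - z)) - x, y⟫ = (1 - l) * ⟪z - x, y⟫ + l * ⟪z' - x, y⟫ := by
  have h : (z + l • (z' - z)) - x = (z - x) + l • ((z' - x) - (z - x)) := by
    rw [show (z' - x) - (z - x) = z' - z by abel]; abel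
  rw [h, inner_add_left, real_inner_smul_left]
  simp only [inner_sub_left]
  ring

lemma ereal_cases (a : EReal) : a = ⊥ ∨ (∃ r : ℝ, a = (r : EReal)) ∨ a = ⊤ := by
  induction a using EReal.rec with
  | bot => exact Or.inl rfl
  | coe r => exact Or.inr (Or.inl ⟨r, rfl⟩)
  | top => exact Or.inr (Or.inr rfl)

lemma exists_real_ge {a : EReal} (h : a ≠ ⊤) : ∃ r : ℝ, a ≤ (r : EReal) := by
  rcases ereal_cases a with h1 | ⟨r, h1⟩ | h1
  · exact ⟨0, h1 ▸ bot_le⟩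
  · exact ⟨r, h1.le⟩
  · exact absurd h1 h

lemma lsc_seg_contra {v : En n → EReal} (hv : LowerSemicontinuous v) {x z : En n}
    {α b : ℝ} (hα : (α : EReal) < v x)
    (hseg : ∀ t : ℝ, 0 < t → t < 1 → v (x + t • (z - x)) ≤ (((1 - t) * α + t * b : ℝ) : EReal)) :
    False := by
  obtain ⟨q, hq1, hq2⟩ := EReal.exists_between_coe_real hα
  have hwc : Continuous fun t : ℝ => x + t • (z - x) := by continuity
  have hcont : Filter.Tendsto (fun t : ℝ => x + t • (z - x)) (𝓝[>] 0) (𝓝 x) := by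
    simpa using (hwc.tendsto 0).mono_left nhdsWithin_le_nhds
  have h1 : ∀ᶠ t in 𝓝[>] (0:ℝ), (q : EReal) < v (x + t • (z - x)) :=
    hcont.eventually (hv x _ hq2)
  have h2 : ∀ᶠ t in 𝓝[>] (0:ℝ), (1 - t) * α + t * b < q := by
    have hgc : Continuous fun t : ℝ => (1 - t) * α + t * b := by continuity
    have : Filter.Tendsto (fun t : ℝ => (1 - t) * α + t * b) (𝓝[>] 0) (𝓝 α) := by
      simpa using (hgc.tendsto 0).mono_left nhdsWithin_le_nhds
    exact this.eventually_lt_const (by exact_mod_cast hq1)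
  have h3 : ∀ᶠ t in 𝓝[>] (0:ℝ), t < 1 :=
    eventually_nhdsWithin_of_eventually_nhds (tendsto_id.eventually_lt_const one_pos)
  have h4 : ∀ᶠ t in 𝓝[>] (0:ℝ), 0 < t := self_mem_nhdsWithin
  obtain ⟨t, ht1, ht2, ht3, ht4⟩ := (h1.and (h2.and (h3.and h4))).exists
  have h5 : v (x + t • (z - x)) < (q : EReal) :=
    (hseg t ht4 ht3).trans_lt (EReal.coe_lt_coe_iff.mpr ht2)
  exact absurd (ht1.trans h5) (lt_irrefl _)

lemma cornerC {u v : En n → EReal} (hul : LowerSemicontinuous u) (hvl : LowerSemicontinuous v)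
    (hmin : ConvexFn (fun w => u w ⊓ v w)) {x z : En n} {a b : ℝ}
    (hxa : u x ≤ (a : EReal)) (hzb : v z ≤ (b : EReal))
    (huz : u z = ⊤) (hvx : v x = ⊤)
    (hM : ∀ t : ℝ, 0 < t → t < 1 → u (x + t • (z - x)) ⊔ v (x + t • (z - x)) = ⊤) :
    False := by
  set R : ℝ := max a b with hR
  set p : ℝ → En n := fun t => x + t • (z - x) with hp
  have hpc : Continuous p := by continuity
  have hp1 : p 1 = z := by simp [hp]
  have hdisj : ∀ t : ℝ, 0 < t → t < 1 → u (p t) ≤ (R : EReal) ∨ v (p t) ≤ (R : EReal) := by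
    intro t ht0 ht1
    have h1 : u (p t) ⊓ v (p t) ≤ (((1 - t) * a + t * b : ℝ) : EReal) :=
      convexFn_seg hmin (inf_le_left.trans hxa) (inf_le_right.trans hzb) ht0.le ht1.le
    have h2 : ((1 - t) * a + t * b : ℝ) ≤ R := by
      have := le_max_left a b; have := le_max_right a b; nlinarith
    exact inf_le_iff.mp (h1.trans (EReal.coe_le_coe_iff.mpr h2))
  have hv0 : ∀ᶠ t in 𝓝[>] (0:ℝ), (R : EReal) < v (p t) ∧ t < 1 := by
    have hc : Filter.Tendsto p (𝓝[>] 0) (𝓝 x) := by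
      simpa [hp] using (hpc.tendsto 0).mono_left nhdsWithin_le_nhds
    have h1 := hc.eventually (hvl x (R : EReal) (by show v x > _; rw [hvx]; exact EReal.coe_lt_top R))
    have h2 : ∀ᶠ t in 𝓝[>] (0:ℝ), t < 1 :=
      eventually_nhdsWithin_of_eventually_nhds (tendsto_id.eventually_lt_const one_pos)
    exact h1.and h2
  obtain ⟨s0, hs0, hIoo0⟩ := mem_nhdsGT_iff_exists_Ioo_subset.mp hv0
  have hu1 : ∀ᶠ t in 𝓝[<] (1:ℝ), (R : EReal) < u (p t) ∧ 0 < t := by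
    have hc : Filter.Tendsto p (𝓝[<] 1) (𝓝 z) := by
      simpa [hp1] using (hpc.tendsto 1).mono_left nhdsWithin_le_nhds
    have h1 := hc.eventually (hul z (R : EReal) (by show u z > _; rw [huz]; exact EReal.coe_lt_top R))
    have h2 : ∀ᶠ t in 𝓝[<] (1:ℝ), 0 < t :=
      eventually_nhdsWithin_of_eventually_nhds (tendsto_id.eventually_const_lt one_pos)
    exact h1.and h2
  obtain ⟨l1, hl1, hIoo1⟩ := mem_nhdsLT_iff_exists_Ioo_subset.mp hu1
  set t₀ : ℝ := (max l1 0 + 1) / 2 with ht₀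
  have hml1 : max l1 0 < 1 := max_lt hl1 one_pos
  have hmax_lt : max l1 0 < t₀ := by rw [ht₀]; linarith
  have ht₀mem : t₀ ∈ Set.Ioo l1 1 :=
    ⟨lt_of_le_of_lt (le_max_left l1 0) hmax_lt, by rw [ht₀]; linarith⟩
  have ht₀pos : 0 < t₀ := lt_of_le_of_lt (le_max_right l1 0) hmax_lt
  have ht₀lt1 : t₀ < 1 := ht₀mem.2
  have hvt₀ : v (p t₀) ≤ (R : EReal) := by
    rcases hdisj t₀ ht₀pos ht₀lt1 with h | h
    · exact absurd h (not_le.mpr (hIoo1 ht₀mem).1)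
    · exact h
  set T : Set ℝ := {t | t ∈ Set.Ioo (0:ℝ) 1 ∧ v (p t) ≤ (R : EReal)} with hT
  have hTne : T.Nonempty := ⟨t₀, ⟨ht₀pos, ht₀lt1⟩, hvt₀⟩
  have hTbdd : BddBelow T := ⟨0, fun t ht => ht.1.1.le⟩
  set ts : ℝ := sInf T with hts
  have htslb : ∀ t ∈ T, s0 ≤ t := by
    intro t ht
    by_contra hlt
    push_neg at hlt
    exact absurd ht.2 (not_le.mpr (hIoo0 ⟨ht.1.1, hlt⟩).1)
  have htspos : 0 < ts := lt_of_lt_of_le hs0 (le_csInf hTne htslb)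
  have htslt1 : ts < 1 :=
    lt_of_le_of_lt (csInf_le hTbdd hTne.choose_spec) hTne.choose_spec.1.2
  have hvts : v (p ts) ≤ (R : EReal) := by
    by_contra hgt
    push_neg at hgt
    have hev := (hpc.tendsto ts).eventually (hvl (p ts) (R : EReal) hgt)
    obtain ⟨ε, hε, hball⟩ := Metric.eventually_nhds_iff.mp hev
    obtain ⟨t', ht'T, ht'lt⟩ := (csInf_lt_iff hTbdd hTne).mp (show sInf T < ts + ε by linarith)
    have hge : ts ≤ t' := csInf_le hTbdd ht'T
    have hdist : dist t' ts < ε := by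
      rw [Real.dist_eq, abs_of_nonneg (by linarith)]; linarith
    exact absurd ht'T.2 (not_le.mpr (hball hdist))
  have huts : u (p ts) ≤ (R : EReal) := by
    by_contra hgt
    push_neg at hgt
    have hev := (hpc.tendsto ts).eventually (hul (p ts) (R : EReal) hgt)
    obtain ⟨ε, hε, hball⟩ := Metric.eventually_nhds_iff.mp hev
    set s : ℝ := max (ts - ε / 2) (ts / 2) with hs
    have hslt : s < ts := max_lt (by linarith) (by linarith)
    have hspos : 0 < s := lt_of_lt_of_le (by linarith : (0:ℝ) < ts / 2) (le_max_right _ _)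
    have hsdist : dist s ts < ε := by
      rw [Real.dist_eq, abs_of_nonpos (by linarith)]
      have : ts - ε / 2 ≤ s := le_max_left _ _
      linarith
    have hsnT : s ∉ T := fun hsT => absurd (csInf_le hTbdd hsT) (not_le.mpr hslt)
    have hnv : ¬ v (p s) ≤ (R : EReal) := fun hle => hsnT ⟨⟨hspos, hslt.trans htslt1⟩, hle⟩
    rcases hdisj s hspos (hslt.trans htslt1) with h | h
    · exact absurd h (not_le.mpr (hball hsdist))
    · exact hnv h
  have htop := hM ts htspos htslt1
  have hle : u (p ts) ⊔ v (p ts) ≤ (R : EReal) := sup_le huts hvts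
  rw [htop] at hle
  exact absurd hle (not_le.mpr (EReal.coe_lt_top R))

lemma endgame {u v : En n → EReal} (hul : LowerSemicontinuous u) (hvl : LowerSemicontinuous v)
    {z z' : En n} {a a' : ℝ}
    (hm : ∀ l : ℝ, 0 ≤ l → l ≤ 1 →
      u (z + l • (z' - z)) ⊓ v (z + l • (z' - z)) ≤ (((1-l)*a + l*a' : ℝ) : EReal))
    (hM : ∀ l : ℝ, 0 ≤ l → l ≤ 1 →
      (((1-l)*a + l*a' : ℝ) : EReal) < u (z + l • (z' - z)) ⊔ v (z + l • (z' - z)))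
    (h0 : u z < v z) (h1 : v z' < u z') : False := by
  set w : ℝ → En n := fun l => z + l • (z' - z) with hw
  have hwc : Continuous w := by continuity
  set g : ℝ → ℝ := fun l => (1-l)*a + l*a' with hg
  have hgc : Continuous g := by continuity
  set S : Set ℝ := {l | l ∈ Set.Icc (0:ℝ) 1 ∧ u (w l) < v (w l)} with hS
  have hw0 : w 0 = z := by simp [hw]
  have hw1 : w 1 = z' := by simp [hw]
  have h0S : (0:ℝ) ∈ S := ⟨⟨le_refl 0, zero_le_one⟩, by rwa [hw0]⟩
  have hSbdd : BddAbove S := ⟨1, fun l hl => hl.1.2⟩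
  set ls : ℝ := sSup S with hls
  have hls0 : 0 ≤ ls := le_csSup hSbdd h0S
  have hls1 : ls ≤ 1 := csSup_le ⟨0, h0S⟩ fun l hl => hl.1.2
  have hmls := hm ls hls0 hls1
  have hMls := hM ls hls0 hls1
  have hne : u (w ls) ≠ v (w ls) := by
    intro heq
    rw [heq, inf_idem] at hmls
    rw [heq, sup_idem] at hMls
    exact absurd (hmls.trans_lt hMls) (lt_irrefl _)
  rcases lt_or_gt_of_ne hne with hc | hc
  · have hlslt1 : ls < 1 := by
      rcases eq_or_lt_of_le hls1 with he | hl
      · exfalso; rw [he, hw1] at hc; exact absurd (h1.trans hc) (lt_irrefl _)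
      · exact hl
    have hsupv : u (w ls) ⊔ v (w ls) = v (w ls) := sup_eq_right.mpr hc.le
    rw [hsupv] at hMls
    obtain ⟨q, hq1, hq2⟩ := EReal.exists_between_coe_real hMls
    have hev1 : ∀ᶠ l in 𝓝[>] ls, (q : EReal) < v (w l) :=
      ((hwc.tendsto ls).mono_left nhdsWithin_le_nhds).eventually (hvl (w ls) _ hq2)
    have hev2 : ∀ᶠ l in 𝓝[>] ls, g l < q :=
      ((hgc.tendsto ls).mono_left nhdsWithin_le_nhds).eventually_lt_const
        (by exact_mod_cast hq1)
    have hev3 : ∀ᶠ l in 𝓝[>] ls, l < 1 :=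
      eventually_nhdsWithin_of_eventually_nhds (tendsto_id.eventually_lt_const hlslt1)
    have hev4 : ∀ᶠ l in 𝓝[>] ls, ls < l := self_mem_nhdsWithin
    obtain ⟨l, hl1', hl2', hl3', hl4'⟩ := (hev1.and (hev2.and (hev3.and hev4))).exists
    have hlS : l ∉ S := fun hmem => absurd (le_csSup hSbdd hmem) (not_le.mpr hl4')
    have hlIcc : l ∈ Set.Icc (0:ℝ) 1 := ⟨hls0.trans hl4'.le, hl3'.le⟩
    have huv : ¬ u (w l) < v (w l) := fun h => hlS ⟨hlIcc, h⟩
    have hinf : u (w l) ⊓ v (w l) = v (w l) := inf_eq_right.mpr (not_lt.mp huv)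
    have hβ := hm l hlIcc.1 hlIcc.2
    rw [hinf] at hβ
    exact absurd (hl1'.trans_le (hβ.trans (EReal.coe_le_coe_iff.mpr hl2'.le))) (lt_irrefl _)
  · have hls0' : 0 < ls := by
      rcases eq_or_lt_of_le hls0 with he | hl
      · exfalso; rw [← he, hw0] at hc; exact absurd (h0.trans hc) (lt_irrefl _)
      · exact hl
    have hsupu : u (w ls) ⊔ v (w ls) = u (w ls) := sup_eq_left.mpr hc.le
    rw [hsupu] at hMls
    obtain ⟨q, hq1, hq2⟩ := EReal.exists_between_coe_real hMls
    have hev1 : ∀ᶠ l in 𝓝 ls, (q : EReal) < u (w l) :=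
      (hwc.tendsto ls).eventually (hul (w ls) _ hq2)
    have hev2 : ∀ᶠ l in 𝓝 ls, g l < q :=
      (hgc.tendsto ls).eventually_lt_const (by exact_mod_cast hq1)
    obtain ⟨ε, hε, hball⟩ := Metric.eventually_nhds_iff.mp (hev1.and hev2)
    obtain ⟨l, hlS, hllt⟩ := exists_lt_of_lt_csSup ⟨0, h0S⟩ (show ls - ε < sSup S by linarith)
    have hlle : l ≤ ls := le_csSup hSbdd hlS
    have hldist : dist l ls < ε := by
      rw [Real.dist_eq, abs_of_nonpos (by linarith)]; linarith
    obtain ⟨hql, hgl⟩ := hball hldist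
    have hinf : u (w l) ⊓ v (w l) = u (w l) := inf_eq_left.mpr hlS.2.le
    have hβ := hm l hlS.1.1 hlS.1.2
    rw [hinf] at hβ
    exact absurd (hql.trans_le (hβ.trans (EReal.coe_le_coe_iff.mpr hgl.le))) (lt_irrefl _)

lemma memF1 {u v : En n → EReal} {x y : En n}
    (h : y ∈ subdiff (fun w => u w ⊓ v w) x) (hle : u x ≤ v x) :
    y ∈ subdiff u x := by
  intro z
  have hz : (u x ⊓ v x) + (⟪z - x, y⟫ : EReal) ≤ u z ⊓ v z := h z
  rw [inf_eq_left.mpr hle] at hz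
  exact hz.trans inf_le_left

lemma memF2 {u v : En n → EReal} {x y : En n}
    (h : y ∈ subdiff u x) (hle : v x ≤ u x) :
    y ∈ subdiff (fun w => u w ⊔ v w) x := by
  intro z
  show (u x ⊔ v x) + (⟪z - x, y⟫ : EReal) ≤ u z ⊔ v z
  rw [sup_eq_left.mpr hle]
  exact (h z).trans le_sup_left

lemma memF3sup {u v : En n → EReal} {x y : En n}
    (hu' : y ∈ subdiff u x) (hv' : y ∈ subdiff v x) :
    y ∈ subdiff (fun w => u w ⊔ v w) x := by
  intro z
  show (u x ⊔ v x) + (⟪z - x, y⟫ : EReal) ≤ u z ⊔ v z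
  rcases le_total (u x) (v x) with h | h
  · rw [sup_eq_right.mpr h]; exact (hv' z).trans le_sup_right
  · rw [sup_eq_left.mpr h]; exact (hu' z).trans le_sup_left

lemma memF3inf {u v : En n → EReal} {x y : En n}
    (hu' : y ∈ subdiff u x) (hv' : y ∈ subdiff v x) :
    y ∈ subdiff (fun w => u w ⊓ v w) x := by
  intro z
  show (u x ⊓ v x) + (⟪z - x, y⟫ : EReal) ≤ u z ⊓ v z
  refine le_inf ?_ ?_
  · exact (add_le_add_left inf_le_left _).trans (hu' z)
  · exact (add_le_add_left inf_le_right _).trans (hv' z)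

lemma lemB {u v : En n → EReal} (hvl : LowerSemicontinuous v)
    (hmin : ConvexFn fun w => u w ⊓ v w) {x y : En n}
    (hy : y ∈ subdiff u x) (hlt : u x < v x) :
    y ∈ subdiff (fun w => u w ⊓ v w) x := by
  intro z
  show (u x ⊓ v x) + (⟪z - x, y⟫ : EReal) ≤ u z ⊓ v z
  rw [inf_eq_left.mpr hlt.le]
  refine le_inf (hy z) ?_
  by_contra hcon
  push_neg at hcon
  rcases ereal_cases (u x) with hbot | ⟨α, hα⟩ | htop
  · rw [hbot, EReal.bot_add] at hcon; exact absurd hcon not_lt_bot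
  · rw [hα] at hcon hlt
    obtain ⟨b, hb1, hb2⟩ := EReal.exists_between_coe_real hcon
    have hb2' : b < α + ⟪z - x, y⟫ := by exact_mod_cast hb2
    have key : ∀ t : ℝ, 0 < t → t < 1 →
        v (x + t • (z - x)) ≤ (((1 - t) * α + t * b : ℝ) : EReal) := by
      intro t ht0 ht1
      have hmseg : u (x + t • (z - x)) ⊓ v (x + t • (z - x))
          ≤ (((1 - t) * α + t * b : ℝ) : EReal) :=
        convexFn_seg hmin (show u x ⊓ v x ≤ ((α : ℝ) : EReal) from inf_le_left.trans hα.le)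
          (inf_le_right.trans hb1.le) ht0.le ht1.le
      rcases le_or_gt (u (x + t • (z - x))) (v (x + t • (z - x))) with hcase | hcase
      · exfalso
        have h1 : ((α : ℝ) : EReal) + ((t * ⟪z - x, y⟫ : ℝ) : EReal) ≤ u (x + t • (z - x)) := by
          have h := hy (x + t • (z - x))
          rwa [hα, inner_seg'] at h
        rw [inf_eq_left.mpr hcase] at hmseg
        have h2 : (((α + t * ⟪z - x, y⟫ : ℝ)) : EReal) ≤ (((1 - t) * α + t * b : ℝ) : EReal) := by
          rw [EReal.coe_add]
          exact h1.trans hmseg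
        have h3 : α + t * ⟪z - x, y⟫ ≤ (1 - t) * α + t * b := EReal.coe_le_coe_iff.mp h2
        have h4 : t * ⟪z - x, y⟫ ≤ t * (b - α) := by nlinarith
        have h5 : ⟪z - x, y⟫ ≤ b - α := le_of_mul_le_mul_left h4 ht0
        linarith
      · have hinf : u (x + t • (z - x)) ⊓ v (x + t • (z - x)) = v (x + t • (z - x)) :=
          inf_eq_right.mpr hcase.le
        rwa [hinf] at hmseg
    exact lsc_seg_contra hvl hlt key
  · rw [htop] at hlt; exact absurd hlt not_top_lt

lemma lemE {u v : En n → EReal} (hul : LowerSemicontinuous u) (hvl : LowerSemicontinuous v)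
    (hv : ConvexFn v) (hmin : ConvexFn fun w => u w ⊓ v w) {x y : En n}
    (hsup : y ∈ subdiff (fun w => u w ⊔ v w) x) (hlt : u x < v x) :
    y ∈ subdiff v x := by
  intro z
  by_contra hcon
  push_neg at hcon
  have hsup' : ∀ w : En n, v x + (⟪w - x, y⟫ : EReal) ≤ u w ⊔ v w := by
    intro w
    have h : (u x ⊔ v x) + (⟪w - x, y⟫ : EReal) ≤ u w ⊔ v w := hsup w
    rwa [sup_eq_right.mpr hlt.le] at h
  rcases ereal_cases (v x) with hbot | ⟨β, hβ⟩ | htop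
  · rw [hbot, EReal.bot_add] at hcon; exact absurd hcon not_lt_bot
  · rw [hβ] at hcon hlt
    obtain ⟨b, hb1, hb2⟩ := EReal.exists_between_coe_real hcon
    have hb2' : b < β + ⟪z - x, y⟫ := by exact_mod_cast hb2
    obtain ⟨α, hα1, hα2⟩ := EReal.exists_between_coe_real hlt
    have hα2' : α < β := by exact_mod_cast hα2
    have key : ∀ t : ℝ, 0 < t → t < 1 →
        v (x + t • (z - x)) ≤ (((1 - t) * α + t * b : ℝ) : EReal) := by
      intro t ht0 ht1
      rcases le_or_gt (v (x + t • (z - x))) (u (x + t • (z - x))) with hcase | hcase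
      · have hmseg : u (x + t • (z - x)) ⊓ v (x + t • (z - x))
            ≤ (((1 - t) * α + t * b : ℝ) : EReal) :=
          convexFn_seg hmin (inf_le_left.trans hα1.le) (inf_le_right.trans hb1.le) ht0.le ht1.le
        rwa [inf_eq_right.mpr hcase] at hmseg
      · exfalso
        have h1 : ((β : ℝ) : EReal) + ((t * ⟪z - x, y⟫ : ℝ) : EReal) ≤ v (x + t • (z - x)) := by
          have h := hsup' (x + t • (z - x))
          rw [hβ, inner_seg'] at h
          rwa [sup_eq_right.mpr hcase.le] at h
        have h2 : v (x + t • (z - x)) ≤ (((1 - t) * β + t * b : ℝ) : EReal) :=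
          convexFn_seg hv (le_of_eq hβ) hb1.le ht0.le ht1.le
        have h3 : β + t * ⟪z - x, y⟫ ≤ (1 - t) * β + t * b := by
          have := (EReal.coe_add β (t * ⟪z - x, y⟫)) ▸ (h1.trans h2)
          exact EReal.coe_le_coe_iff.mp this
        have h4 : t * ⟪z - x, y⟫ ≤ t * (b - β) := by nlinarith
        have h5 : ⟪z - x, y⟫ ≤ b - β := le_of_mul_le_mul_left h4 ht0
        linarith
    exact lsc_seg_contra hvl (show ((α : ℝ) : EReal) < v x by rw [hβ]; exact hα2) key
  · have hux : u x ≠ ⊤ := (htop ▸ hlt).ne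
    obtain ⟨a, ha⟩ := exists_real_ge hux
    have hvzt : v z ≠ ⊤ := by
      rw [htop, EReal.top_add_coe] at hcon
      exact hcon.ne
    obtain ⟨b, hb⟩ := exists_real_ge hvzt
    have huz : u z = ⊤ := by
      have h := hsup' z
      rw [htop, EReal.top_add_coe] at h
      have hsup_top : u z ⊔ v z = ⊤ := top_le_iff.mp h
      rcases le_total (u z) (v z) with hle | hle
      · rw [sup_eq_right.mpr hle] at hsup_top; exact absurd hsup_top hvzt
      · rwa [sup_eq_left.mpr hle] at hsup_top
    have hMseg : ∀ t : ℝ, 0 < t → t < 1 →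
        u (x + t • (z - x)) ⊔ v (x + t • (z - x)) = ⊤ := by
      intro t ht0 ht1
      have h := hsup' (x + t • (z - x))
      rw [htop, EReal.top_add_coe] at h
      exact top_le_iff.mp h
    exact cornerC hul hvl hmin ha hb huz htop hMseg

lemma lemA {u v : En n → EReal} (hul : LowerSemicontinuous u) (hvl : LowerSemicontinuous v)
    (hmin : ConvexFn fun w => u w ⊓ v w) {x y : En n}
    (hy : y ∈ subdiff (fun w => u w ⊔ v w) x) :
    y ∈ subdiff u x ∨ y ∈ subdiff v x := by
  by_contra hcon
  push_neg at hcon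
  obtain ⟨hcu, hcv⟩ := hcon
  simp only [subdiff, Set.mem_setOf_eq, not_forall, not_le] at hcu hcv
  obtain ⟨z, hz⟩ := hcu
  obtain ⟨z', hz'⟩ := hcv
  have hyW : ∀ w : En n, (u x ⊔ v x) + (⟪w - x, y⟫ : EReal) ≤ u w ⊔ v w := hy
  have hzM : u z < (u x ⊔ v x) + ((⟪z - x, y⟫ : ℝ) : EReal) :=
    hz.trans_le (add_le_add_left le_sup_left _)
  have hz'M : v z' < (u x ⊔ v x) + ((⟪z' - x, y⟫ : ℝ) : EReal) :=
    hz'.trans_le (add_le_add_left le_sup_right _)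
  obtain ⟨a, ha1, ha2⟩ := EReal.exists_between_coe_real hzM
  obtain ⟨a', ha'1, ha'2⟩ := EReal.exists_between_coe_real hz'M
  have h0 : u z < v z := by
    have h := hzM.trans_le (hyW z)
    by_contra hle
    push_neg at hle
    rw [sup_eq_left.mpr hle] at h
    exact absurd h (lt_irrefl _)
  have h1 : v z' < u z' := by
    have h := hz'M.trans_le (hyW z')
    by_contra hle
    push_neg at hle
    rw [sup_eq_right.mpr hle] at h
    exact absurd h (lt_irrefl _)
  have hstrict : ∀ l : ℝ, 0 ≤ l → l ≤ 1 →
      (((1 - l) * a + l * a' : ℝ) : EReal)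
        < (u x ⊔ v x) + (((1 - l) * ⟪z - x, y⟫ + l * ⟪z' - x, y⟫ : ℝ) : EReal) := by
    intro l h0l h1l
    rcases ereal_cases (u x ⊔ v x) with hbot | ⟨μ, hμ⟩ | htop
    · rw [hbot, EReal.bot_add] at ha2; exact absurd ha2 not_lt_bot
    · rw [hμ] at ha2 ha'2 ⊢
      rw [← EReal.coe_add] at ha2 ha'2 ⊢
      rw [EReal.coe_lt_coe_iff] at ha2 ha'2 ⊢
      set c : ℝ := ⟪z - x, y⟫
      set c' : ℝ := ⟪z' - x, y⟫
      set D : ℝ := max (a - (μ + c)) (a' - (μ + c')) with hD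
      have hDneg : D < 0 := max_lt (by linarith) (by linarith)
      have e1 : (1 - l) * a ≤ (1 - l) * (μ + c + D) := by
        have := le_max_left (a - (μ + c)) (a' - (μ + c'))
        exact mul_le_mul_of_nonneg_left (by linarith) (by linarith)
      have e2 : l * a' ≤ l * (μ + c' + D) := by
        have := le_max_right (a - (μ + c)) (a' - (μ + c'))
        exact mul_le_mul_of_nonneg_left (by linarith) h0l
      have hsum : (1 - l) * (μ + c + D) + l * (μ + c' + D)
          = μ + ((1 - l) * c + l * c') + D := by ring
      linarith
    · rw [htop, EReal.top_add_coe]; exact EReal.coe_lt_top _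
  have hmseg : ∀ l : ℝ, 0 ≤ l → l ≤ 1 →
      u (z + l • (z' - z)) ⊓ v (z + l • (z' - z)) ≤ (((1 - l) * a + l * a' : ℝ) : EReal) :=
    fun l h0l h1l =>
      convexFn_seg hmin (inf_le_left.trans ha1.le) (inf_le_right.trans ha'1.le) h0l h1l
  have hMseg : ∀ l : ℝ, 0 ≤ l → l ≤ 1 →
      (((1 - l) * a + l * a' : ℝ) : EReal) < u (z + l • (z' - z)) ⊔ v (z + l • (z' - z)) := by
    intro l h0l h1l
    refine (hstrict l h0l h1l).trans_le ?_
    have h := hyW (z + l • (z' - z))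
    rwa [inner_seg2'] at h
  exact endgame hul hvl hmseg hMseg h0 h1

end Auxiliary

theorem sgraph_inclusion_exclusion (n : ℕ) (u v : En n → EReal)
    (hu : ConvexFn u) (hv : ConvexFn v)
    (hul : LowerSemicontinuous u) (hvl : LowerSemicontinuous v)
    (hmin : ConvexFn (fun x => u x ⊓ v x)) :
    sgraph (fun z => u z ⊔ v z) ∪ sgraph (fun z => u z ⊓ v z)
        = sgraph u ∪ sgraph v ∧
      sgraph (fun z => u z ⊔ v z) ∩ sgraph (fun z => u z ⊓ v z)
        = sgraph u ∩ sgraph v := by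
  have hswap_inf : (fun w => v w ⊓ u w) = fun w : En n => u w ⊓ v w :=
    funext fun w => inf_comm _ _
  have hswap_sup : (fun w => v w ⊔ u w) = fun w : En n => u w ⊔ v w :=
    funext fun w => sup_comm _ _
  have hmin' : ConvexFn fun w => v w ⊓ u w := by rw [hswap_inf]; exact hmin
  constructor
  · apply Set.Subset.antisymm
    · rintro ⟨x, y⟩ hxy
      rcases hxy with h | h
      · rcases lemA hul hvl hmin h with h' | h'
        · exact Or.inl h'
        · exact Or.inr h'
      · rcases le_total (u x) (v x) with hle | hle
        · exact Or.inl (memF1 h hle)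
        · refine Or.inr (memF1 (u := v) (v := u) ?_ hle)
          rw [hswap_inf]; exact h
    · rintro ⟨x, y⟩ hxy
      rcases hxy with h | h
      · rcases le_or_gt (v x) (u x) with hle | hlt
        · exact Or.inl (memF2 h hle)
        · exact Or.inr (lemB hvl hmin h hlt)
      · rcases le_or_gt (u x) (v x) with hle | hlt
        · refine Or.inl ?_
          show y ∈ subdiff (fun w => u w ⊔ v w) x
          rw [← hswap_sup]
          exact memF2 (u := v) (v := u) h hle
        · refine Or.inr ?_
          show y ∈ subdiff (fun w => u w ⊓ v w) x
          rw [← hswap_inf]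
          exact lemB (u := v) (v := u) hul hmin' h hlt
  · apply Set.Subset.antisymm
    · rintro ⟨x, y⟩ ⟨hM, hm⟩
      rcases lt_trichotomy (u x) (v x) with hlt | heq | hlt
      · exact ⟨memF1 hm hlt.le, lemE hul hvl hv hmin hM hlt⟩
      · refine ⟨memF1 hm heq.le, memF1 (u := v) (v := u) ?_ heq.ge⟩
        rw [hswap_inf]; exact hm
      · constructor
        · refine lemE (u := v) (v := u) hvl hul hu hmin' ?_ hlt
          rw [hswap_sup]; exact hM
        · refine memF1 (u := v) (v := u) ?_ hlt.le
          rw [hswap_inf]; exact hm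
    · rintro ⟨x, y⟩ ⟨hu', hv'⟩
      exact ⟨memF3sup hu' hv', memF3inf hu' hv'⟩
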